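/- Let α ∈ (0,1), c₁ > 0 and define F(x) = ∫_x^{c₁} Σ_{n=0}^∞ (Lⁿ G_{c₁})(y) dy where L and G_{c₁} are as in the paper. Then F is positive on [0, c₁), F(c₁) = 0, and F'(x) = -Σ_{n=0}^∞ (Lⁿ G_{c₁})(x) < 0 for x ∈ [0, c₁), with the series converging uniformly on [0,c₁]. -/

import Mathlib

open Real MeasureTheory intervalIntegral Set Filter Topology

/-- The operator `L`:
`(Lh)(x) = (1/Γ(1-α)) ∫_x^{c₁} ∫_μ^{c₁} (1 - p^{-2/α} μ^{2/α})^{-α} h(p) dp dμ`. -/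
noncomputable def Lop (α c₁ : ℝ) (h : ℝ → ℝ) (x : ℝ) : ℝ :=
  (1 / Real.Gamma (1 - α)) *
    ∫ μ in x..c₁, ∫ p in μ..c₁, (1 - p ^ (-(2/α)) * μ ^ (2/α)) ^ (-α) * h p

/-- `G_{c₁}(x) = (1/Γ(1-α)) ∫_x^{c₁} (1 - c₁^{-2/α} μ^{2/α})^{-α} dμ`. -/
noncomputable def Gker (α c₁ x : ℝ) : ℝ :=
  (1 / Real.Gamma (1 - α)) * ∫ μ in x..c₁, (1 - c₁ ^ (-(2/α)) * μ ^ (2/α)) ^ (-α)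

set_option linter.unusedSectionVars false
set_option linter.unusedVariables false
set_option maxHeartbeats 1000000

namespace Stmt8Aux

/-- The kernel. -/
noncomputable def Kk (α p μ : ℝ) : ℝ := (1 - p ^ (-(2/α)) * μ ^ (2/α)) ^ (-α)

noncomputable def Sb (α c₁ : ℝ) : ℝ := 2 * (2*c₁) ^ (1-α) / (1-α)
noncomputable def Cb (α c₁ : ℝ) : ℝ := 2*c₁ + 2 * c₁ ^ α * Sb α c₁
noncomputable def Db (α c₁ : ℝ) : ℝ := (1 / Real.Gamma (1-α)) * Cb α c₁

section Basic
variable {α c₁ : ℝ} (hα0 : 0 < α) (hα1 : α < 1) (hc₁ : 0 < c₁)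

include hα1 in
lemma gamma_pos : 0 < Real.Gamma (1-α) := Real.Gamma_pos_of_pos (by linarith)

include hα0 hα1 hc₁ in
lemma Sb_nonneg : 0 ≤ Sb α c₁ := by
  have : (0:ℝ) ≤ (2*c₁) ^ (1-α) := Real.rpow_nonneg (by linarith) _
  have h1 : (0:ℝ) < 1 - α := by linarith
  unfold Sb; positivity

include hα0 hα1 hc₁ in
lemma Cb_nonneg : 0 ≤ Cb α c₁ := by
  have h1 := Sb_nonneg hα0 hα1 hc₁
  have h2 : (0:ℝ) ≤ c₁ ^ α := Real.rpow_nonneg (by linarith) _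
  unfold Cb; positivity

include hα0 hα1 hc₁ in
lemma Db_nonneg : 0 ≤ Db α c₁ :=
  mul_nonneg (by have := gamma_pos (α := α) hα1; positivity) (Cb_nonneg hα0 hα1 hc₁)

include hα0 hα1 in
lemma hβ1 : (1:ℝ) ≤ 2/α := by
  rw [le_div_iff₀ hα0]; linarith

lemma abs_one_sub_rpow_le {a b : ℝ} (ha : 0 ≤ a) (hb : 1 ≤ b) : |1 - a| ≤ |1 - a ^ b| := by
  rcases le_total a 1 with h | h
  · have h2 : a ^ b ≤ a := by
      calc a ^ b ≤ a ^ (1:ℝ) := Real.rpow_le_rpow_of_exponent_ge' ha h (by norm_num) hb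
      _ = a := Real.rpow_one a
    rw [abs_of_nonneg (by linarith), abs_of_nonneg (by linarith)]
    linarith
  · have h2 : a ≤ a ^ b := by
      calc a = a ^ (1:ℝ) := (Real.rpow_one a).symm
      _ ≤ a ^ b := Real.rpow_le_rpow_of_exponent_le h hb
    rw [abs_of_nonpos (by linarith), abs_of_nonpos (by linarith)]
    linarith

include hα0 in
lemma kb_nonpos {A : ℝ} (hA : A ≤ 0) : |(1 - A) ^ (-α)| ≤ 1 := by
  have h1 : (1:ℝ) ≤ 1 - A := by linarith
  calc |(1 - A) ^ (-α)| ≤ |1 - A| ^ (-α) := Real.abs_rpow_le_abs_rpow _ _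
  _ = (1 - A) ^ (-α) := by rw [abs_of_nonneg (by linarith)]
  _ ≤ 1 ^ (-α) := Real.rpow_le_rpow_of_nonpos one_pos h1 (by linarith)
  _ = 1 := Real.one_rpow _

include hα0 hα1 hc₁ in
lemma kb_core {m p : ℝ} (hm : 0 ≤ m) (hp : 0 < p) (hpc : p ≤ c₁) :
    |(1 - (m/p) ^ (2/α)) ^ (-α)| ≤ 1 + c₁ ^ α * |p - m| ^ (-α) := by
  have hc₁α : (0:ℝ) ≤ c₁ ^ α := Real.rpow_nonneg hc₁.le _
  have habs : (0:ℝ) ≤ |p - m| ^ (-α) := Real.rpow_nonneg (abs_nonneg _) _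
  set a : ℝ := m / p with ha
  have ha0 : 0 ≤ a := div_nonneg hm hp.le
  by_cases hA : a = 1
  · rw [hA, Real.one_rpow, sub_self, Real.zero_rpow (by linarith)]
    simpa using by positivity
  · have h1 : |1 - a| ≤ |1 - a ^ (2/α)| := abs_one_sub_rpow_le ha0 (hβ1 hα0 hα1)
    have h2 : 0 < |1 - a| := abs_pos.2 (sub_ne_zero.2 (fun h => hA h.symm))
    have h3 : |(1 - a ^ (2/α)) ^ (-α)| ≤ |1 - a ^ (2/α)| ^ (-α) :=
      Real.abs_rpow_le_abs_rpow _ _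
    have h4 : |1 - a ^ (2/α)| ^ (-α) ≤ |1 - a| ^ (-α) :=
      Real.rpow_le_rpow_of_nonpos h2 h1 (by linarith)
    have h5 : |1 - a| = |p - m| / p := by
      rw [ha]
      rw [show (1:ℝ) - m / p = (p - m)/p by field_simp]
      rw [abs_div, abs_of_pos hp]
    have h6 : |1 - a| ^ (-α) = |p - m| ^ (-α) * p ^ α := by
      rw [h5, Real.div_rpow (abs_nonneg _) hp.le, Real.rpow_neg hp.le α, div_inv_eq_mul]
    have h7 : |p - m| ^ (-α) * p ^ α ≤ |p - m| ^ (-α) * c₁ ^ α :=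
      mul_le_mul_of_nonneg_left (Real.rpow_le_rpow hp.le hpc hα0.le) habs
    calc |(1 - a ^ (2/α)) ^ (-α)| ≤ |1 - a| ^ (-α) := h3.trans h4
    _ ≤ |p - m| ^ (-α) * c₁ ^ α := by rw [h6]; exact h7
    _ ≤ 1 + c₁ ^ α * |p - m| ^ (-α) := by nlinarith

end Basic


section Kernel
variable {α c₁ : ℝ} (hα0 : 0 < α) (hα1 : α < 1) (hc₁ : 0 < c₁)

lemma rpow_of_neg {x : ℝ} (hx : x < 0) (y : ℝ) : x ^ y = (-x) ^ y * Real.cos (y * π) := by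
  rw [Real.rpow_def_of_neg hx, Real.rpow_def_of_pos (by linarith : 0 < -x),
    ← Real.log_neg_eq_log]

include hα0 in
lemma A_eq {p μ : ℝ} (hp : 0 < p) (hμ : 0 ≤ μ) :
    p ^ (-(2/α)) * μ ^ (2/α) = (μ/p) ^ (2/α) := by
  rw [Real.div_rpow hμ hp.le, Real.rpow_neg hp.le]
  ring

include hα0 hα1 hc₁ in
lemma kb1 {μ p : ℝ} (hμ : 0 ≤ μ) (hpμ : μ < p) (hpc : p ≤ c₁) :
    |Kk α p μ| ≤ 1 + c₁ ^ α * |p - μ| ^ (-α) := by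
  have hp : 0 < p := lt_of_le_of_lt hμ hpμ
  rw [Kk, A_eq hα0 hp hμ]
  exact kb_core hα0 hα1 hc₁ hμ hp hpc

/-- `σ₁`: the shift factor for negative `μ`, positive `p`. -/
noncomputable def sig1 (α : ℝ) : ℝ := (max (Real.cos ((2/α) * π)) 0) ^ (α/2)

/-- `σ₂`: the shift factor for negative `μ`, negative `p`. -/
noncomputable def sig2 (α : ℝ) : ℝ := ((Real.cos ((2/α) * π))^2) ^ (α/2)

include hα0 in
lemma sig1_mem : sig1 α ∈ Set.Icc (0:ℝ) 1 := by
  constructor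
  · exact Real.rpow_nonneg (le_max_right _ _) _
  · exact Real.rpow_le_one (le_max_right _ _) (max_le (Real.cos_le_one _) (by norm_num)) (by positivity)

include hα0 in
lemma sig2_mem : sig2 α ∈ Set.Icc (0:ℝ) 1 := by
  constructor
  · exact Real.rpow_nonneg (by positivity) _
  · refine Real.rpow_le_one (by positivity) ?_ (by positivity)
    have h1 := Real.neg_one_le_cos ((2/α) * π)
    have h2 := Real.cos_le_one ((2/α) * π)
    nlinarith

include hα0 in
lemma kk_p_zero (μ : ℝ) : Kk α 0 μ = 1 := by
  rw [Kk, Real.zero_rpow (neg_ne_zero.mpr (ne_of_gt (by positivity))), zero_mul, sub_zero,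
    Real.one_rpow]

include hα0 hα1 hc₁ in
lemma kb2 {μ p : ℝ} (hμ : μ < 0) (hp : 0 ≤ p) (hpc : p ≤ c₁) :
    |Kk α p μ| ≤ 1 + c₁ ^ α * |p - sig1 α * (-μ)| ^ (-α) := by
  have hc₁α : (0:ℝ) ≤ c₁ ^ α := Real.rpow_nonneg hc₁.le _
  have habs : (0:ℝ) ≤ |p - sig1 α * (-μ)| ^ (-α) := Real.rpow_nonneg (abs_nonneg _) _
  rcases hp.eq_or_lt with h0 | hp
  · rw [← h0] at habs ⊢
    rw [kk_p_zero hα0, abs_one]; nlinarith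
  have hμβ : μ ^ (2/α) = (-μ) ^ (2/α) * Real.cos ((2/α) * π) := rpow_of_neg hμ _
  rcases le_or_gt (Real.cos ((2/α) * π)) 0 with hco | hco
  · have hA : p ^ (-(2/α)) * μ ^ (2/α) ≤ 0 := by
      rw [hμβ, ← mul_assoc]
      exact mul_nonpos_of_nonneg_of_nonpos
        (mul_nonneg (Real.rpow_nonneg hp.le _) (Real.rpow_nonneg (by linarith) _)) hco
    have := kb_nonpos (α := α) hα0 hA
    rw [Kk]; nlinarith
  · have hs1 : sig1 α = (Real.cos ((2/α) * π)) ^ (α/2) := by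
      rw [sig1, max_eq_left hco.le]
    have hsβ : sig1 α ^ (2/α) = Real.cos ((2/α) * π) := by
      rw [hs1, ← Real.rpow_mul hco.le]
      rw [show (α/2) * (2/α) = 1 by field_simp]
      exact Real.rpow_one _
    have hkey : p ^ (-(2/α)) * μ ^ (2/α) = ((sig1 α * (-μ))/p) ^ (2/α) := by
      rw [Real.div_rpow (mul_nonneg (sig1_mem hα0).1 (by linarith)) hp.le,
        Real.mul_rpow (sig1_mem hα0).1 (by linarith), hsβ, hμβ, Real.rpow_neg hp.le]
      ring
    rw [Kk, hkey]
    exact kb_core hα0 hα1 hc₁ (mul_nonneg (sig1_mem hα0).1 (by linarith)) hp hpc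

include hα0 hα1 hc₁ in
lemma kb3 {μ p : ℝ} (hμc : -c₁ ≤ μ) (hμ : μ < 0) (hpμ : μ ≤ p) (hp : p ≤ 0) :
    |Kk α p μ| ≤ 1 + c₁ ^ α * |p + sig2 α * (-μ)| ^ (-α) := by
  have hc₁α : (0:ℝ) ≤ c₁ ^ α := Real.rpow_nonneg hc₁.le _
  have habs : (0:ℝ) ≤ |p + sig2 α * (-μ)| ^ (-α) := Real.rpow_nonneg (abs_nonneg _) _
  rcases hp.lt_or_eq with hp | h0
  swap
  · rw [h0] at habs ⊢
    rw [kk_p_zero hα0, abs_one]; nlinarith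
  have hμβ : μ ^ (2/α) = (-μ) ^ (2/α) * Real.cos ((2/α) * π) := rpow_of_neg hμ _
  have hpβ : p ^ (-(2/α)) = (-p) ^ (-(2/α)) * Real.cos ((2/α) * π) := by
    rw [rpow_of_neg hp (-(2/α)), neg_mul, Real.cos_neg]
  have hsβ : sig2 α ^ (2/α) = (Real.cos ((2/α) * π))^2 := by
    rw [sig2, ← Real.rpow_mul (by positivity)]
    rw [show (α/2) * (2/α) = 1 by field_simp]
    exact Real.rpow_one _
  have hnp : 0 < -p := by linarith
  have hkey : p ^ (-(2/α)) * μ ^ (2/α) = ((sig2 α * (-μ))/(-p)) ^ (2/α) := by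
    rw [Real.div_rpow (mul_nonneg (sig2_mem hα0).1 (by linarith)) hnp.le,
      Real.mul_rpow (sig2_mem hα0).1 (by linarith), hsβ, hμβ, hpβ, Real.rpow_neg hnp.le]
    ring
  have hcore := kb_core hα0 hα1 hc₁ (m := sig2 α * (-μ)) (p := -p)
    (mul_nonneg (sig2_mem hα0).1 (by linarith)) hnp (by linarith)
  rw [Kk, hkey]
  have : |-p - sig2 α * (-μ)| = |p + sig2 α * (-μ)| := by
    rw [show -p - sig2 α * (-μ) = -(p + sig2 α * (-μ)) by ring, abs_neg]
  rw [this] at hcore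
  exact hcore

include hα0 hα1 hc₁ in
lemma kb0 {μ : ℝ} (h1 : -c₁ < μ) (h2 : μ < c₁) :
    |Kk α c₁ μ| ≤ 1 + c₁ ^ α * (|μ - c₁| ^ (-α) + |μ + c₁| ^ (-α)) := by
  have hc₁α : (0:ℝ) ≤ c₁ ^ α := Real.rpow_nonneg hc₁.le _
  have hab1 : (0:ℝ) ≤ |μ - c₁| ^ (-α) := Real.rpow_nonneg (abs_nonneg _) _
  have hab2 : (0:ℝ) ≤ |μ + c₁| ^ (-α) := Real.rpow_nonneg (abs_nonneg _) _
  rcases le_or_gt 0 μ with hμ | hμ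
  · have h := kb_core hα0 hα1 hc₁ (m := μ) (p := c₁) hμ hc₁ le_rfl
    rw [Kk, A_eq hα0 hc₁ hμ, abs_sub_comm c₁ μ] at *
    nlinarith
  · -- μ < 0
    have hμβ : μ ^ (2/α) = (-μ) ^ (2/α) * Real.cos ((2/α) * π) := rpow_of_neg hμ _
    rcases le_or_gt (Real.cos ((2/α) * π)) 0 with hco | hco
    · have hA : c₁ ^ (-(2/α)) * μ ^ (2/α) ≤ 0 := by
        rw [hμβ, ← mul_assoc]
        exact mul_nonpos_of_nonneg_of_nonpos
          (mul_nonneg (Real.rpow_nonneg hc₁.le _) (Real.rpow_nonneg (by linarith) _)) hco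
      have := kb_nonpos (α := α) hα0 hA
      rw [Kk]; nlinarith
    · have hs1 : sig1 α = (Real.cos ((2/α) * π)) ^ (α/2) := by
        rw [sig1, max_eq_left hco.le]
      have hsβ : sig1 α ^ (2/α) = Real.cos ((2/α) * π) := by
        rw [hs1, ← Real.rpow_mul hco.le]
        rw [show (α/2) * (2/α) = 1 by field_simp]
        exact Real.rpow_one _
      have hkey : c₁ ^ (-(2/α)) * μ ^ (2/α) = ((sig1 α * (-μ))/c₁) ^ (2/α) := by
        rw [Real.div_rpow (mul_nonneg (sig1_mem hα0).1 (by linarith)) hc₁.le,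
          Real.mul_rpow (sig1_mem hα0).1 (by linarith), hsβ, hμβ, Real.rpow_neg hc₁.le]
        ring
      have hcore := kb_core hα0 hα1 hc₁ (m := sig1 α * (-μ)) (p := c₁)
        (mul_nonneg (sig1_mem hα0).1 (by linarith)) hc₁ le_rfl
      rw [Kk, hkey]
      -- compare the shift: c₁ - sig1*(-μ) ≥ c₁ + μ > 0
      have hσ : sig1 α * (-μ) ≤ -μ := by
        nlinarith [(sig1_mem (α := α) hα0).1, (sig1_mem (α := α) hα0).2]
      have hpos : 0 < μ + c₁ := by linarith
      have hcmp : |μ + c₁| ^ (-α) ≥ |c₁ - sig1 α * (-μ)| ^ (-α) := by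
        have e1 : |μ + c₁| = μ + c₁ := abs_of_pos hpos
        have e2 : |c₁ - sig1 α * (-μ)| = c₁ - sig1 α * (-μ) := abs_of_pos (by linarith)
        rw [e1, e2]
        exact Real.rpow_le_rpow_of_nonpos hpos (by linarith) (by linarith)
      nlinarith

include hα0 in
lemma kk_nonneg {μ p : ℝ} (hμ : 0 ≤ μ) (hpμ : μ ≤ p) : 0 ≤ Kk α p μ := by
  rcases (hμ.trans hpμ).eq_or_lt with h0 | hp
  · rw [← h0, kk_p_zero hα0]; norm_num
  · rw [Kk, A_eq hα0 hp hμ]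
    refine Real.rpow_nonneg ?_ _
    have : (μ/p) ^ (2/α) ≤ 1 :=
      Real.rpow_le_one (div_nonneg hμ hp.le) (by rw [div_le_one hp]; exact hpμ) (by positivity)
    linarith

include hα0 in
lemma kk_ge_one {μ p : ℝ} (hμ : 0 ≤ μ) (hμp : μ < p) : 1 ≤ Kk α p μ := by
  have hp : 0 < p := lt_of_le_of_lt hμ hμp
  rw [Kk, A_eq hα0 hp hμ]
  have h1 : (μ/p) ^ (2/α) < 1 :=
    Real.rpow_lt_one (div_nonneg hμ hp.le) (by rw [div_lt_one hp]; exact hμp) (by positivity)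
  have h2 : 0 ≤ (μ/p) ^ (2/α) := Real.rpow_nonneg (div_nonneg hμ hp.le) _
  exact Real.one_le_rpow_of_pos_of_le_one_of_nonpos (by linarith) (by linarith) (by linarith)

end Kernel

section Shift
variable {α c₁ : ℝ} (hα0 : 0 < α) (hα1 : α < 1) (hc₁ : 0 < c₁)

include hα0 hα1 in
lemma intIntegrable_abs_rpow (a b : ℝ) :
    IntervalIntegrable (fun x => |x| ^ (-α)) volume a b := by
  have hpos : ∀ b : ℝ, 0 ≤ b → IntervalIntegrable (fun x => |x| ^ (-α)) volume 0 b := by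
    intro b hb
    have h := intervalIntegrable_rpow' (a := 0) (b := b) (r := -α) (by linarith)
    rw [intervalIntegrable_iff_integrableOn_Ioc_of_le hb] at h ⊢
    refine h.congr_fun ?_ measurableSet_Ioc
    intro x hx
    simp [abs_of_pos hx.1]
  have hall : ∀ b : ℝ, IntervalIntegrable (fun x => |x| ^ (-α)) volume 0 b := by
    intro b
    rcases le_or_gt 0 b with hb | hb
    · exact hpos b hb
    · have h := hpos (-b) (by linarith)
      have := (IntervalIntegrable.iff_comp_neg).mp h
      simpa using this
  exact (hall a).symm.trans (hall b)

include hα0 hα1 in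
lemma intIntegrable_abs_sub_rpow (c a b : ℝ) :
    IntervalIntegrable (fun x => |x - c| ^ (-α)) volume a b := by
  have h := (intIntegrable_abs_rpow hα0 hα1 (a - c) (b - c)).comp_sub_right c
  simpa using h

/-- Signed antiderivative of `|y|^(-α)`. -/
noncomputable def Phi (α t : ℝ) : ℝ := if 0 ≤ t then t ^ (1-α) / (1-α) else -((-t) ^ (1-α) / (1-α))

include hα1 in
lemma Phi_neg (t : ℝ) : Phi α (-t) = -Phi α t := by
  rcases lt_trichotomy t 0 with h | h | h
  · rw [Phi, Phi, if_pos (by linarith : (0:ℝ) ≤ -t), if_neg (not_le.mpr h)]; ring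
  · subst h
    rw [Phi, Phi, neg_zero, if_pos le_rfl, Real.zero_rpow (by intro hh; linarith), zero_div,
      neg_zero]
    simp
  · rw [Phi, Phi, if_neg (not_le.mpr (by linarith : -t < 0)), if_pos h.le, neg_neg]

include hα1 in
lemma abs_Phi (t : ℝ) : |Phi α t| ≤ |t| ^ (1-α) / (1-α) := by
  have h1 : (0:ℝ) < 1 - α := by linarith
  rcases le_or_gt 0 t with h | h
  · have hx : (0:ℝ) ≤ t ^ (1-α) := Real.rpow_nonneg h _
    rw [Phi, if_pos h, abs_of_nonneg (by positivity), abs_of_nonneg h]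
  · have hx : (0:ℝ) ≤ (-t) ^ (1-α) := Real.rpow_nonneg (by linarith) _
    rw [Phi, if_neg (not_le.mpr h), abs_neg, abs_of_nonneg (by positivity), abs_of_neg h]

include hα0 hα1 in
lemma integral_abs_rpow_eq {u v : ℝ} (huv : u ≤ v) :
    ∫ y in u..v, |y| ^ (-α) = Phi α v - Phi α u := by
  have key : ∀ w z : ℝ, 0 ≤ w → w ≤ z → ∫ y in w..z, |y| ^ (-α) = Phi α z - Phi α w := by
    intro w z hw hwz
    have h1 : ∫ y in w..z, |y| ^ (-α) = ∫ y in w..z, y ^ (-α) := by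
      refine intervalIntegral.integral_congr ?_
      intro y hy
      rw [Set.uIcc_of_le hwz] at hy
      simp only
      rw [abs_of_nonneg (le_trans hw hy.1)]
    rw [h1, integral_rpow (Or.inl (by linarith))]
    rw [Phi, Phi, if_pos (le_trans hw hwz), if_pos hw]
    rw [show (-α) + 1 = 1 - α by ring]
    ring
  have keyneg : ∀ w z : ℝ, z ≤ 0 → w ≤ z → ∫ y in w..z, |y| ^ (-α) = Phi α z - Phi α w := by
    intro w z hz hwz
    have h1 : ∫ y in w..z, |y| ^ (-α) = ∫ y in (-z)..(-w), |y| ^ (-α) := by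
      rw [← intervalIntegral.integral_comp_neg (fun y => |y| ^ (-α))]
      exact intervalIntegral.integral_congr (fun y _ => by simp)
    rw [h1, key (-z) (-w) (by linarith) (by linarith), Phi_neg hα1, Phi_neg hα1]
    ring
  rcases le_or_gt 0 u with hu | hu
  · exact key u v hu huv
  rcases le_or_gt v 0 with hv | hv
  · exact keyneg u v hv huv
  · rw [← intervalIntegral.integral_add_adjacent_intervals
      (intIntegrable_abs_rpow hα0 hα1 u 0) (intIntegrable_abs_rpow hα0 hα1 0 v),
      key 0 v le_rfl hv.le, keyneg u 0 le_rfl hu.le]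
    ring

include hα0 hα1 in
lemma integral_abs_sub_rpow_le {c a b R : ℝ} (hab : a ≤ b)
    (h1 : |a - c| ≤ R) (h2 : |b - c| ≤ R) :
    ∫ x in a..b, |x - c| ^ (-α) ≤ 2 * R ^ (1-α) / (1-α) := by
  have h1α : (0:ℝ) < 1 - α := by linarith
  rw [intervalIntegral.integral_comp_sub_right (fun y => |y| ^ (-α)) c]
  rw [integral_abs_rpow_eq hα0 hα1 (by linarith)]
  have b1 := abs_Phi (α := α) hα1 (b - c)
  have b2 := abs_Phi (α := α) hα1 (a - c)
  have m1 : |b - c| ^ (1-α) ≤ R ^ (1-α) := Real.rpow_le_rpow (abs_nonneg _) h2 (by linarith)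
  have m2 : |a - c| ^ (1-α) ≤ R ^ (1-α) := Real.rpow_le_rpow (abs_nonneg _) h1 (by linarith)
  have d1 : |b - c| ^ (1-α) / (1-α) ≤ R ^ (1-α) / (1-α) := by gcongr
  have d2 : |a - c| ^ (1-α) / (1-α) ≤ R ^ (1-α) / (1-α) := by gcongr
  have l1 := le_abs_self (Phi α (b - c))
  have l2 := neg_abs_le (Phi α (a - c))
  have e : 2 * R ^ (1-α) / (1-α) = R ^ (1-α) / (1-α) + R ^ (1-α) / (1-α) := by ring
  linarith

end Shift

section Inner
variable {α c₁ : ℝ} (hα0 : 0 < α) (hα1 : α < 1) (hc₁ : 0 < c₁)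

lemma measurable_Kk2 : Measurable (fun q : ℝ × ℝ => Kk α q.1 q.2) := by
  unfold Kk
  exact ((measurable_const.sub ((measurable_fst.pow measurable_const).mul
    (measurable_snd.pow measurable_const)))).pow measurable_const

lemma measurable_Kk_left (μ : ℝ) : Measurable (fun p : ℝ => Kk α p μ) :=
  (measurable_Kk2 (α := α)).comp (measurable_id.prodMk measurable_const)

include hα0 hα1 hc₁ in
lemma inner_est {μ : ℝ} (hμl : -c₁ ≤ μ) (hμr : μ ≤ c₁)
    {h : ℝ → ℝ} (hmeas : AEStronglyMeasurable h (volume.restrict (Set.Ioc μ c₁)))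
    {Hb : ℝ} (hHb : 0 ≤ Hb) (hh : ∀ p ∈ Set.Icc μ c₁, |h p| ≤ Hb) :
    IntervalIntegrable (fun p => Kk α p μ * h p) volume μ c₁ ∧
    |∫ p in μ..c₁, Kk α p μ * h p| ≤ Hb * Cb α c₁ := by
  have hc₁α : (0:ℝ) ≤ c₁ ^ α := Real.rpow_nonneg hc₁.le _
  set m : ℝ := max μ 0 with hm
  have hm0 : 0 ≤ m := le_max_right _ _
  have hμm : μ ≤ m := le_max_left _ _
  have hmc : m ≤ c₁ := max_le hμr hc₁.le
  set e₂ : ℝ := if 0 ≤ μ then μ else sig1 α * (-μ) with he₂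
  set e₁ : ℝ := -(sig2 α * (-μ)) with he₁
  have habs_e₂ : |e₂| ≤ c₁ := by
    rw [he₂]; split_ifs with h0
    · rw [abs_of_nonneg h0]; exact hμr
    · rw [abs_of_nonneg (mul_nonneg (sig1_mem hα0).1 (by linarith [not_le.mp h0]))]
      nlinarith [(sig1_mem (α := α) hα0).1, (sig1_mem (α := α) hα0).2, not_le.mp h0]
  have habs_e₁ : |e₁| ≤ c₁ := by
    rw [he₁, abs_neg, abs_mul, abs_of_nonneg (sig2_mem (α := α) hα0).1, abs_neg]
    have h1 : |μ| ≤ c₁ := abs_le.mpr ⟨hμl, hμr⟩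
    nlinarith [(sig2_mem (α := α) hα0).1, (sig2_mem (α := α) hα0).2, abs_nonneg μ]
  -- pointwise bounds on the two pieces
  have hb1 : ∀ p ∈ Set.Ioc μ m, |Kk α p μ * h p| ≤ Hb * (1 + c₁ ^ α * |p - e₁| ^ (-α)) := by
    intro p hp
    have hμ0 : μ < 0 := by
      by_contra h0; push_neg at h0
      have hmm : m = μ := by rw [hm, max_eq_left h0]
      rw [hmm] at hp; exact absurd hp.2 (not_le.mpr hp.1)
    have hm' : m = 0 := by rw [hm, max_eq_right hμ0.le]
    have hKb := kb3 hα0 hα1 hc₁ hμl hμ0 hp.1.le (hm' ▸ hp.2)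
    have hhp : |h p| ≤ Hb := hh p ⟨hp.1.le, le_trans hp.2 hmc⟩
    have hnn : (0:ℝ) ≤ 1 + c₁ ^ α * |p + sig2 α * (-μ)| ^ (-α) := by
      have := Real.rpow_nonneg (abs_nonneg (p + sig2 α * (-μ))) (-α); positivity
    rw [he₁, sub_neg_eq_add, abs_mul, mul_comm Hb _]
    exact mul_le_mul hKb hhp (abs_nonneg _) hnn
  have hb2 : ∀ p ∈ Set.Ioc m c₁, |Kk α p μ * h p| ≤ Hb * (1 + c₁ ^ α * |p - e₂| ^ (-α)) := by
    intro p hp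
    have hKb : |Kk α p μ| ≤ 1 + c₁ ^ α * |p - e₂| ^ (-α) := by
      rw [he₂]; split_ifs with h0
      · exact kb1 hα0 hα1 hc₁ h0 (lt_of_le_of_lt (le_max_left μ 0) hp.1) hp.2
      · exact kb2 hα0 hα1 hc₁ (not_le.mp h0) (le_trans hm0 hp.1.le) hp.2
    have hhp : |h p| ≤ Hb := hh p ⟨le_trans hμm hp.1.le, hp.2⟩
    have hnn : (0:ℝ) ≤ 1 + c₁ ^ α * |p - e₂| ^ (-α) := by
      have := Real.rpow_nonneg (abs_nonneg (p - e₂)) (-α); positivity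
    rw [abs_mul, mul_comm Hb _]
    exact mul_le_mul hKb hhp (abs_nonneg _) hnn
  -- integrable dominators
  have iD1 : IntervalIntegrable (fun p => Hb * (1 + c₁ ^ α * |p - e₁| ^ (-α))) volume μ m :=
    ((intervalIntegrable_const.add
      ((intIntegrable_abs_sub_rpow hα0 hα1 e₁ μ m).const_mul (c₁ ^ α))).const_mul Hb)
  have iD2 : IntervalIntegrable (fun p => Hb * (1 + c₁ ^ α * |p - e₂| ^ (-α))) volume m c₁ :=
    ((intervalIntegrable_const.add
      ((intIntegrable_abs_sub_rpow hα0 hα1 e₂ m c₁).const_mul (c₁ ^ α))).const_mul Hb)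
  -- integrability of the integrand on the two pieces
  have hmeas1 : AEStronglyMeasurable (fun p => Kk α p μ * h p)
      (volume.restrict (Set.Ioc μ m)) :=
    ((measurable_Kk_left (α := α) μ).aestronglyMeasurable).mul
      (hmeas.mono_measure (Measure.restrict_mono (Set.Ioc_subset_Ioc_right hmc) le_rfl))
  have hmeas2 : AEStronglyMeasurable (fun p => Kk α p μ * h p)
      (volume.restrict (Set.Ioc m c₁)) :=
    ((measurable_Kk_left (α := α) μ).aestronglyMeasurable).mul
      (hmeas.mono_measure (Measure.restrict_mono (Set.Ioc_subset_Ioc_left hμm) le_rfl))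
  have int1 : IntervalIntegrable (fun p => Kk α p μ * h p) volume μ m := by
    rw [intervalIntegrable_iff_integrableOn_Ioc_of_le hμm]
    refine Integrable.mono'
      ((intervalIntegrable_iff_integrableOn_Ioc_of_le hμm).mp iD1) hmeas1 ?_
    exact (ae_restrict_iff' measurableSet_Ioc).mpr (Filter.Eventually.of_forall
      (fun p hp => by rw [Real.norm_eq_abs]; exact hb1 p hp))
  have int2 : IntervalIntegrable (fun p => Kk α p μ * h p) volume m c₁ := by
    rw [intervalIntegrable_iff_integrableOn_Ioc_of_le hmc]
    refine Integrable.mono'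
      ((intervalIntegrable_iff_integrableOn_Ioc_of_le hmc).mp iD2) hmeas2 ?_
    exact (ae_restrict_iff' measurableSet_Ioc).mpr (Filter.Eventually.of_forall
      (fun p hp => by rw [Real.norm_eq_abs]; exact hb2 p hp))
  refine ⟨int1.trans int2, ?_⟩
  -- the quantitative bound
  have hsplit := (intervalIntegral.integral_add_adjacent_intervals int1 int2).symm
  have n1 : |∫ p in μ..m, Kk α p μ * h p|
      ≤ |∫ p in μ..m, Hb * (1 + c₁ ^ α * |p - e₁| ^ (-α))| := by
    have := intervalIntegral.norm_integral_le_of_norm_le (μ := volume)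
      (f := fun p => Kk α p μ * h p) (a := μ) (b := m) hμm ?_ iD1
    · rw [Real.norm_eq_abs] at this; exact this.trans (le_abs_self _)
    · exact Filter.Eventually.of_forall
        (fun p hp => by rw [Real.norm_eq_abs]; exact hb1 p hp)
  have n2 : |∫ p in m..c₁, Kk α p μ * h p|
      ≤ |∫ p in m..c₁, Hb * (1 + c₁ ^ α * |p - e₂| ^ (-α))| := by
    have := intervalIntegral.norm_integral_le_of_norm_le (μ := volume)
      (f := fun p => Kk α p μ * h p) (a := m) (b := c₁) hmc ?_ iD2
    · rw [Real.norm_eq_abs] at this; exact this.trans (le_abs_self _)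
    · exact Filter.Eventually.of_forall
        (fun p hp => by rw [Real.norm_eq_abs]; exact hb2 p hp)
  -- evaluate the dominator integrals
  have habsμ : |μ| ≤ c₁ := abs_le.mpr ⟨hμl, hμr⟩
  have habsm : |m| ≤ c₁ := by rw [abs_of_nonneg hm0]; exact hmc
  have hval : ∀ (a b e : ℝ), a ≤ b → |a| ≤ c₁ → |b| ≤ c₁ → |e| ≤ c₁ → b - a ≤ c₁ →
      |∫ p in a..b, Hb * (1 + c₁ ^ α * |p - e| ^ (-α))|
        ≤ Hb * (c₁ + c₁ ^ α * Sb α c₁) := by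
    intro a b e hab ha hb he hba
    have iS : IntervalIntegrable (fun p => |p - e| ^ (-α)) volume a b :=
      intIntegrable_abs_sub_rpow hα0 hα1 e a b
    have hSnn : 0 ≤ ∫ p in a..b, |p - e| ^ (-α) :=
      intervalIntegral.integral_nonneg hab (fun x _ => Real.rpow_nonneg (abs_nonneg _) _)
    have hS : ∫ p in a..b, |p - e| ^ (-α) ≤ Sb α c₁ := by
      rw [Sb]
      have h2c : (0:ℝ) ≤ 2*c₁ := by linarith
      refine integral_abs_sub_rpow_le hα0 hα1 hab ?_ ?_
      · calc |a - e| ≤ |a| + |e| := abs_sub _ _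
        _ ≤ 2*c₁ := by linarith
      · calc |b - e| ≤ |b| + |e| := abs_sub _ _
        _ ≤ 2*c₁ := by linarith
    have hev : ∫ p in a..b, Hb * (1 + c₁ ^ α * |p - e| ^ (-α))
        = Hb * ((b - a) + c₁ ^ α * ∫ p in a..b, |p - e| ^ (-α)) := by
      rw [intervalIntegral.integral_const_mul]
      congr 1
      rw [intervalIntegral.integral_add intervalIntegrable_const (iS.const_mul (c₁ ^ α)),
        intervalIntegral.integral_const, intervalIntegral.integral_const_mul]
      simp [smul_eq_mul]
    rw [hev, abs_of_nonneg (mul_nonneg hHb (add_nonneg (by linarith)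
      (mul_nonneg hc₁α hSnn)))]
    refine mul_le_mul_of_nonneg_left ?_ hHb
    exact add_le_add hba (mul_le_mul_of_nonneg_left hS hc₁α)
  have v1 := hval μ m e₁ hμm habsμ habsm habs_e₁ (by
    rcases le_or_gt 0 μ with h0 | h0
    · rw [hm, max_eq_left h0]; linarith
    · rw [hm, max_eq_right h0.le]; linarith)
  have v2 := hval m c₁ e₂ hmc habsm (by rw [abs_of_pos hc₁]) habs_e₂ (by linarith)
  calc |∫ p in μ..c₁, Kk α p μ * h p|
      = |(∫ p in μ..m, Kk α p μ * h p) + ∫ p in m..c₁, Kk α p μ * h p| := by rw [← hsplit]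
  _ ≤ |∫ p in μ..m, Kk α p μ * h p| + |∫ p in m..c₁, Kk α p μ * h p| := abs_add_le _ _
  _ ≤ Hb * (c₁ + c₁ ^ α * Sb α c₁) + Hb * (c₁ + c₁ ^ α * Sb α c₁) := by
      have := n1.trans v1; have := n2.trans v2; linarith
  _ = Hb * Cb α c₁ := by rw [Cb]; ring

include hα0 in
lemma inner_nonneg {μ : ℝ} (hμ0 : 0 ≤ μ) (hμc : μ ≤ c₁) {h : ℝ → ℝ}
    (hh : ∀ p ∈ Set.Icc μ c₁, 0 ≤ h p) :
    0 ≤ ∫ p in μ..c₁, Kk α p μ * h p :=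
  intervalIntegral.integral_nonneg hμc
    (fun p hp => mul_nonneg (kk_nonneg hα0 hμ0 hp.1) (hh p hp))

end Inner

section GkInd
variable {α c₁ : ℝ} (hα0 : 0 < α) (hα1 : α < 1) (hc₁ : 0 < c₁)

lemma measurable_Kk_right (p : ℝ) : Measurable (fun μ : ℝ => Kk α p μ) :=
  (measurable_Kk2 (α := α)).comp (measurable_const.prodMk measurable_id)

include hα0 hα1 hc₁ in
lemma Cb_pos : 0 < Cb α c₁ := by
  have h1 := Sb_nonneg hα0 hα1 hc₁
  have h2 : (0:ℝ) ≤ c₁ ^ α := Real.rpow_nonneg hc₁.le _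
  rw [Cb]; nlinarith

include hα0 hα1 hc₁ in
lemma Db_pos : 0 < Db α c₁ :=
  mul_pos (by have := gamma_pos (α := α) hα1; positivity) (Cb_pos hα0 hα1 hc₁)

/-- dominator for the `G` kernel. -/
noncomputable def Dom0 (α c₁ μ : ℝ) : ℝ :=
  1 + c₁ ^ α * (|μ - c₁| ^ (-α) + |μ + c₁| ^ (-α))

include hα0 hα1 in
lemma Dom0_II (a b : ℝ) : IntervalIntegrable (Dom0 α c₁) volume a b := by
  refine intervalIntegrable_const.add (IntervalIntegrable.const_mul ?_ _)
  exact (intIntegrable_abs_sub_rpow hα0 hα1 c₁ a b).add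
    (by simpa [sub_neg_eq_add] using intIntegrable_abs_sub_rpow hα0 hα1 (-c₁) a b)

include hα0 hα1 hc₁ in
lemma K0_ae_bound {s : Set ℝ} (hs : MeasurableSet s) (hsub : s ⊆ Set.Ioc (-c₁) c₁) :
    ∀ᵐ μ ∂(volume.restrict s), ‖Kk α c₁ μ‖ ≤ Dom0 α c₁ μ := by
  have hns : ∀ᵐ (μ : ℝ) ∂volume, μ ≠ c₁ := by
    rw [MeasureTheory.ae_iff]
    convert Real.volume_singleton (a := c₁) using 2
    ext x; simp
  filter_upwards [ae_restrict_mem hs, ae_restrict_of_ae hns] with μ hμ hne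
  have h1 := hsub hμ
  rw [Real.norm_eq_abs, Dom0]
  exact kb0 hα0 hα1 hc₁ h1.1 (lt_of_le_of_ne h1.2 hne)

include hα0 hα1 hc₁ in
lemma K0_int : IntegrableOn (fun μ => Kk α c₁ μ) (Set.Icc (-c₁) c₁) volume := by
  rw [integrableOn_Icc_iff_integrableOn_Ioc]
  have hD : IntegrableOn (Dom0 α c₁) (Set.Ioc (-c₁) c₁) volume :=
    (intervalIntegrable_iff_integrableOn_Ioc_of_le (by linarith)).mp (Dom0_II hα0 hα1 (-c₁) c₁)
  exact Integrable.mono' hD ((measurable_Kk_right (α := α) c₁).aestronglyMeasurable)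
    (K0_ae_bound hα0 hα1 hc₁ measurableSet_Ioc (fun _ h => h))

include hc₁ in
lemma primitive_contOn {f : ℝ → ℝ} (hf : IntegrableOn f (Set.Icc (-c₁) c₁) volume) (γv : ℝ) :
    ContinuousOn (fun x => γv * ∫ t in x..c₁, f t) (Set.Icc (-c₁) c₁) := by
  have h : IntegrableOn f (Set.uIcc c₁ (-c₁)) volume := by
    rwa [Set.uIcc_comm, Set.uIcc_of_le (by linarith)]
  have h2 := intervalIntegral.continuousOn_primitive_interval h
  rw [Set.uIcc_comm, Set.uIcc_of_le (by linarith)] at h2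
  have h3 : ContinuousOn (fun x => γv * -∫ t in c₁..x, f t) (Set.Icc (-c₁) c₁) :=
    continuousOn_const.mul h2.neg
  refine h3.congr ?_
  intro x _
  simp only
  rw [intervalIntegral.integral_symm c₁ x]

include hα0 hα1 hc₁ in
lemma G_eq (x : ℝ) :
    Gker α c₁ x = (1 / Real.Gamma (1-α)) * ∫ μ in x..c₁, Kk α c₁ μ := rfl

include hα0 hα1 hc₁ in
lemma G_bound {x : ℝ} (hx : x ∈ Set.Icc (-c₁) c₁) : |Gker α c₁ x| ≤ Db α c₁ := by
  have hγ := gamma_pos (α := α) hα1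
  have hγ' : (0:ℝ) ≤ 1 / Real.Gamma (1-α) := by positivity
  have hc₁α : (0:ℝ) ≤ c₁ ^ α := Real.rpow_nonneg hc₁.le _
  rw [G_eq hα0 hα1 hc₁, abs_mul, abs_of_nonneg hγ', Db]
  refine mul_le_mul_of_nonneg_left ?_ hγ'
  have hxc : x ≤ c₁ := hx.2
  have hx1 : -c₁ ≤ x := hx.1
  have hub := intervalIntegral.norm_integral_le_of_norm_le (μ := volume)
    (f := fun μ => Kk α c₁ μ) (a := x) (b := c₁) hxc
    (by exact (ae_restrict_iff' measurableSet_Ioc).mp <| K0_ae_bound hα0 hα1 hc₁ measurableSet_Ioc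
          (Set.Ioc_subset_Ioc_left hx.1))
    (Dom0_II hα0 hα1 x c₁)
  rw [Real.norm_eq_abs] at hub
  refine hub.trans ?_
  -- evaluate the dominator integral
  have i1 := intIntegrable_abs_sub_rpow hα0 hα1 c₁ x c₁
  have i2 : IntervalIntegrable (fun μ => |μ + c₁| ^ (-α)) volume x c₁ := by
    simpa [sub_neg_eq_add] using intIntegrable_abs_sub_rpow hα0 hα1 (-c₁) x c₁
  have hev : ∫ μ in x..c₁, Dom0 α c₁ μ
      = (c₁ - x) + c₁ ^ α * ((∫ μ in x..c₁, |μ - c₁| ^ (-α)) + ∫ μ in x..c₁, |μ + c₁| ^ (-α)) := by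
    simp only [Dom0]
    rw [intervalIntegral.integral_add intervalIntegrable_const ((i1.add i2).const_mul _),
      intervalIntegral.integral_const, intervalIntegral.integral_const_mul,
      intervalIntegral.integral_add i1 i2]
    simp [smul_eq_mul]
  have hDnn : 0 ≤ ∫ μ in x..c₁, Dom0 α c₁ μ := by
    refine intervalIntegral.integral_nonneg hxc (fun u _ => ?_)
    have n1 := Real.rpow_nonneg (abs_nonneg (u - c₁)) (-α)
    have n2 := Real.rpow_nonneg (abs_nonneg (u + c₁)) (-α)
    rw [Dom0]; positivity
  rw [hev]
  have s1 : ∫ μ in x..c₁, |μ - c₁| ^ (-α) ≤ Sb α c₁ := by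
    rw [Sb]
    refine integral_abs_sub_rpow_le hα0 hα1 hxc ?_ ?_
    · rw [abs_of_nonpos (by linarith)]; linarith
    · simp; positivity
  have s2 : ∫ μ in x..c₁, |μ + c₁| ^ (-α) ≤ Sb α c₁ := by
    have e : ∫ μ in x..c₁, |μ + c₁| ^ (-α) = ∫ μ in x..c₁, |μ - (-c₁)| ^ (-α) := by
      simp [sub_neg_eq_add]
    rw [e, Sb]
    refine integral_abs_sub_rpow_le hα0 hα1 hxc ?_ ?_
    · rw [abs_of_nonneg (by linarith)]; linarith
    · rw [abs_of_nonneg (by linarith)]; linarith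
  rw [Cb]
  have hmul := mul_le_mul_of_nonneg_left (add_le_add s1 s2) hc₁α
  linarith

include hα0 hα1 hc₁ in
lemma G_contOn : ContinuousOn (Gker α c₁) (Set.Icc (-c₁) c₁) := by
  have h := primitive_contOn hc₁ (K0_int hα0 hα1 hc₁) (1 / Real.Gamma (1-α))
  exact h.congr (fun x _ => G_eq hα0 hα1 hc₁ x)

include hα0 hα1 hc₁ in
lemma G_nonneg {x : ℝ} (hx : x ∈ Set.Icc (0:ℝ) c₁) : 0 ≤ Gker α c₁ x := by
  have hγ := gamma_pos (α := α) hα1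
  rw [G_eq hα0 hα1 hc₁]
  refine mul_nonneg (by positivity) ?_
  exact intervalIntegral.integral_nonneg hx.2
    (fun u hu => kk_nonneg hα0 (le_trans hx.1 hu.1) hu.2)

end GkInd

section Main
variable {α c₁ : ℝ} (hα0 : 0 < α) (hα1 : α < 1) (hc₁ : 0 < c₁)

include hα0 hα1 hc₁ in
lemma main_ind (n : ℕ) :
    ContinuousOn ((Lop α c₁)^[n] (Gker α c₁)) (Set.Icc (-c₁) c₁) ∧
    (∀ x ∈ Set.Icc (-c₁) c₁, |((Lop α c₁)^[n] (Gker α c₁)) x|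
        ≤ Db α c₁ * (Db α c₁ * (c₁ - x)) ^ n / n.factorial) ∧
    (∀ x ∈ Set.Icc (0:ℝ) c₁, 0 ≤ ((Lop α c₁)^[n] (Gker α c₁)) x) := by
  induction n with
  | zero =>
    refine ⟨by simpa using G_contOn hα0 hα1 hc₁, fun x hx => ?_, fun x hx => ?_⟩
    · simpa using G_bound hα0 hα1 hc₁ hx
    · simpa using G_nonneg hα0 hα1 hc₁ hx
  | succ n ih =>
    obtain ⟨hc, hb, hnn⟩ := ih
    have hγ := gamma_pos (α := α) hα1
    have hγ' : (0:ℝ) ≤ 1 / Real.Gamma (1-α) := by positivity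
    have hDb0 := (Db_pos hα0 hα1 hc₁).le
    have hCb0 := (Cb_pos hα0 hα1 hc₁).le
    have hle : (-c₁ : ℝ) ≤ c₁ := by linarith
    set h : ℝ → ℝ := (Lop α c₁)^[n] (Gker α c₁) with hh
    set h' : ℝ → ℝ := Set.IccExtend hle ((Set.Icc (-c₁) c₁).restrict h) with hh'
    have hcont' : Continuous h' :=
      Continuous.Icc_extend' (continuousOn_iff_continuous_restrict.mp hc)
    have hagree : ∀ p ∈ Set.Icc (-c₁) c₁, h' p = h p := by
      intro p hp
      rw [hh', Set.IccExtend_of_mem hle _ hp]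
      rfl
    have hrefb : ∀ μ ∈ Set.Icc (-c₁) c₁, ∀ p ∈ Set.Icc μ c₁,
        |h' p| ≤ Db α c₁ * (Db α c₁ * (c₁ - μ)) ^ n / n.factorial := by
      intro μ hμ p hp
      have hpJ : p ∈ Set.Icc (-c₁) c₁ := ⟨le_trans hμ.1 hp.1, hp.2⟩
      rw [hagree p hpJ]
      refine (hb p hpJ).trans ?_
      have h2 : (0:ℝ) ≤ c₁ - p := by linarith [hp.2]
      have h1 : c₁ - p ≤ c₁ - μ := by linarith [hp.1]
      gcongr
    have hIE : ∀ μ ∈ Set.Icc (-c₁) c₁,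
        IntervalIntegrable (fun p => Kk α p μ * h' p) volume μ c₁ ∧
        |∫ p in μ..c₁, Kk α p μ * h' p|
          ≤ (Db α c₁ * (Db α c₁ * (c₁ - μ)) ^ n / n.factorial) * Cb α c₁ := by
      intro μ hμ
      refine inner_est hα0 hα1 hc₁ hμ.1 hμ.2 hcont'.aestronglyMeasurable ?_ (hrefb μ hμ)
      have hcμ : (0:ℝ) ≤ c₁ - μ := by linarith [hμ.2]
      positivity
    set g' : ℝ → ℝ := fun μ => ∫ p in μ..c₁, Kk α p μ * h' p with hg'
    have hΦm : Measurable (fun z : ℝ × ℝ =>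
        Set.indicator {q : ℝ × ℝ | q.1 < q.2 ∧ q.2 ≤ c₁}
          (fun q => Kk α q.2 q.1 * h' q.2) z) := by
      refine Measurable.indicator ?_ ?_
      · exact ((measurable_Kk2 (α := α)).comp (measurable_snd.prodMk measurable_fst)).mul
          (hcont'.measurable.comp measurable_snd)
      · exact (measurableSet_lt measurable_fst measurable_snd).inter
          (measurableSet_le measurable_snd measurable_const)
    have hg'meas : StronglyMeasurable (fun μ : ℝ => ∫ p, Set.indicator
        {q : ℝ × ℝ | q.1 < q.2 ∧ q.2 ≤ c₁} (fun q => Kk α q.2 q.1 * h' q.2) (μ, p)) :=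
      hΦm.stronglyMeasurable.integral_prod_right'
    have hg'eq : ∀ μ : ℝ, μ ≤ c₁ → g' μ = ∫ p, Set.indicator
        {q : ℝ × ℝ | q.1 < q.2 ∧ q.2 ≤ c₁} (fun q => Kk α q.2 q.1 * h' q.2) (μ, p) := by
      intro μ hμ
      rw [hg']
      simp only
      rw [intervalIntegral.integral_of_le hμ,
        ← MeasureTheory.integral_indicator measurableSet_Ioc]
      congr 1
    have hg'int : IntegrableOn g' (Set.Icc (-c₁) c₁) volume := by
      have hmeas0 : AEStronglyMeasurable g' (volume.restrict (Set.Icc (-c₁) c₁)) := by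
        refine (hg'meas.aestronglyMeasurable.restrict).congr ?_
        refine (ae_restrict_iff' measurableSet_Icc).mpr
          (Filter.Eventually.of_forall (fun μ hμ => ?_))
        exact (hg'eq μ hμ.2).symm
      refine Integrable.mono'
        (g := fun _ => (Db α c₁ * (Db α c₁ * (2*c₁)) ^ n / n.factorial) * Cb α c₁)
        ((integrableOn_const_iff).mpr (Or.inr ?_)) hmeas0 ?_
      · rw [Real.volume_Icc]; exact ENNReal.ofReal_lt_top
      · refine (ae_restrict_iff' measurableSet_Icc).mpr
          (Filter.Eventually.of_forall (fun μ hμ => ?_))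
        rw [Real.norm_eq_abs]
        refine ((hIE μ hμ).2).trans ?_
        have h1 : c₁ - μ ≤ 2*c₁ := by linarith [hμ.1]
        have h2 : (0:ℝ) ≤ c₁ - μ := by linarith [hμ.2]
        have h3 : (Db α c₁ * (c₁ - μ)) ^ n ≤ (Db α c₁ * (2*c₁)) ^ n :=
          pow_le_pow_left₀ (mul_nonneg hDb0 h2) (mul_le_mul_of_nonneg_left h1 hDb0) n
        have h4 : (0:ℝ) < (n.factorial : ℝ) := by positivity
        exact mul_le_mul_of_nonneg_right
          ((div_le_div_iff_of_pos_right h4).mpr (mul_le_mul_of_nonneg_left h3 hDb0)) hCb0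
    have hfeq : ∀ x ∈ Set.Icc (-c₁) c₁,
        (Lop α c₁)^[n+1] (Gker α c₁) x = (1 / Real.Gamma (1-α)) * ∫ t in x..c₁, g' t := by
      intro x hx
      rw [Function.iterate_succ_apply' (Lop α c₁) n (Gker α c₁)]
      show (1 / Real.Gamma (1-α)) * (∫ μ in x..c₁, ∫ p in μ..c₁, Kk α p μ * h p) = _
      congr 1
      refine intervalIntegral.integral_congr (fun μ hμ => ?_)
      rw [Set.uIcc_of_le hx.2] at hμ
      have hμJ : μ ∈ Set.Icc (-c₁) c₁ := ⟨le_trans hx.1 hμ.1, hμ.2⟩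
      simp only [hg']
      refine intervalIntegral.integral_congr (fun p hp => ?_)
      rw [Set.uIcc_of_le hμ.2] at hp
      rw [hagree p ⟨le_trans hμJ.1 hp.1, hp.2⟩]
    refine ⟨?_, ?_, ?_⟩
    · exact ((primitive_contOn hc₁ hg'int (1 / Real.Gamma (1-α))).congr
        (fun x hx => hfeq x hx))
    · intro x hx
      rw [hfeq x hx, abs_mul, abs_of_nonneg hγ']
      set W : ℝ := Db α c₁ * Db α c₁ ^ n * Cb α c₁ / n.factorial with hW
      have hWnn : (0:ℝ) ≤ W := by rw [hW]; positivity
      have hWII : IntervalIntegrable (fun μ => W * (c₁ - μ)^n) volume x c₁ :=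
        Continuous.intervalIntegrable (by fun_prop) _ _
      have hae : ∀ᵐ t ∂(volume.restrict (Set.uIoc x c₁)), ‖g' t‖ ≤ W * (c₁ - t)^n := by
        rw [Set.uIoc_of_le hx.2]
        refine (ae_restrict_iff' measurableSet_Ioc).mpr
          (Filter.Eventually.of_forall (fun μ hμ => ?_))
        rw [Real.norm_eq_abs]
        have hμJ : μ ∈ Set.Icc (-c₁) c₁ := ⟨le_trans hx.1 hμ.1.le, hμ.2⟩
        refine ((hIE μ hμJ).2).trans (le_of_eq ?_)
        rw [hW, mul_pow]; ring
      have hub := intervalIntegral.norm_integral_le_of_norm_le (μ := volume)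
        (f := g') (a := x) (b := c₁) hx.2
        (by rw [Set.uIoc_of_le hx.2] at hae; exact (ae_restrict_iff' measurableSet_Ioc).mp hae) hWII
      have hval : ∫ μ in x..c₁, W * (c₁ - μ)^n = W * ((c₁ - x)^(n+1) / (n+1)) := by
        rw [intervalIntegral.integral_const_mul]
        congr 1
        rw [intervalIntegral.integral_comp_sub_left (fun u => (u:ℝ)^n) c₁, sub_self,
          integral_pow]
        simp
      have hcx : (0:ℝ) ≤ c₁ - x := by linarith [hx.2]
      have hnn2 : (0:ℝ) ≤ W * ((c₁ - x)^(n+1)/(n+1)) := by positivity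
      have hub2 : |∫ t in x..c₁, g' t| ≤ W * ((c₁ - x)^(n+1)/(n+1)) := by
        rw [Real.norm_eq_abs, hval] at hub
        exact hub
      have hfact : ((n+1).factorial : ℝ) = ((n:ℝ)+1) * (n.factorial) := by
        rw [Nat.factorial_succ]; push_cast; ring
      have hn1 : ((n:ℝ)+1) ≠ 0 := by positivity
      have hnf : ((n.factorial:ℝ)) ≠ 0 := by positivity
      have harr : (1 / Real.Gamma (1-α)) * (W * ((c₁ - x)^(n+1) / ((n:ℝ)+1)))
          = Db α c₁ * (Db α c₁ * (c₁ - x)) ^ (n+1) / (n+1).factorial := by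
        rw [hW, mul_pow, hfact,
          show Db α c₁ = (1 / Real.Gamma (1-α)) * Cb α c₁ from rfl]
        have hγne := hγ.ne'
        field_simp
        have hgi : Real.Gamma (1-α) * (Real.Gamma (1-α))⁻¹ = 1 := mul_inv_cancel₀ hγne
        linear_combination (-(Cb α c₁ ^ 2 * Cb α c₁ ^ n * (Real.Gamma (1-α))⁻¹ ^ n
          * (c₁ - x) ^ n * (c₁ - x))) * hgi
      rw [← harr]
      exact mul_le_mul_of_nonneg_left hub2 hγ'
    · intro x hx
      rw [Function.iterate_succ_apply' (Lop α c₁) n (Gker α c₁)]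
      show 0 ≤ (1 / Real.Gamma (1-α)) * ∫ μ in x..c₁, ∫ p in μ..c₁, Kk α p μ * h p
      refine mul_nonneg hγ' ?_
      refine intervalIntegral.integral_nonneg hx.2 (fun μ hμ => ?_)
      exact inner_nonneg hα0 (le_trans hx.1 hμ.1) hμ.2
        (fun p hp => hnn p ⟨le_trans (le_trans hx.1 hμ.1) hp.1, hp.2⟩)

end Main

section Pos
variable {α c₁ : ℝ} (hα0 : 0 < α) (hα1 : α < 1) (hc₁ : 0 < c₁)

include hα0 hα1 hc₁ in
lemma G_pos {x : ℝ} (hx : x ∈ Set.Ico (0:ℝ) c₁) : 0 < Gker α c₁ x := by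
  have hγ := gamma_pos (α := α) hα1
  set m := (x + c₁)/2 with hm
  have hxm : x < m := by rw [hm]; linarith [hx.2]
  have hmc : m < c₁ := by rw [hm]; linarith [hx.2]
  have hint := K0_int hα0 hα1 hc₁
  have i1 : IntervalIntegrable (fun μ => Kk α c₁ μ) volume x m := by
    rw [intervalIntegrable_iff_integrableOn_Ioc_of_le hxm.le]
    exact hint.mono_set (fun μ hμ => ⟨by linarith [hx.1, hμ.1], by linarith [hμ.2]⟩)
  have i2 : IntervalIntegrable (fun μ => Kk α c₁ μ) volume m c₁ := by
    rw [intervalIntegrable_iff_integrableOn_Ioc_of_le hmc.le]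
    exact hint.mono_set (fun μ hμ => ⟨by linarith [hx.1, hμ.1], hμ.2⟩)
  rw [G_eq hα0 hα1 hc₁]
  refine mul_pos (by positivity) ?_
  rw [← intervalIntegral.integral_add_adjacent_intervals i1 i2]
  have hlow : m - x ≤ ∫ μ in x..m, Kk α c₁ μ := by
    have := intervalIntegral.integral_mono_on hxm.le (_root_.intervalIntegrable_const (c := (1:ℝ))) i1
      (fun μ hμ => kk_ge_one hα0 (le_trans hx.1 hμ.1) (lt_of_le_of_lt hμ.2 hmc))
    simpa using this
  have h2 : 0 ≤ ∫ μ in m..c₁, Kk α c₁ μ :=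
    intervalIntegral.integral_nonneg hmc.le
      (fun μ hμ => kk_nonneg hα0 (le_trans (le_trans hx.1 hxm.le) hμ.1) hμ.2)
  linarith

end Pos
end Stmt8Aux

open Stmt8Aux

/-- Let `F(x) = ∫_x^{c₁} Σ_{n=0}^∞ (LⁿG_{c₁})(y) dy`. Then the series converges
uniformly on `[0,c₁]`, `F > 0` on `[0,c₁)`, `F(c₁) = 0`, and for `x ∈ [0,c₁)`
`F'(x) = -Σ_{n=0}^∞ (LⁿG_{c₁})(x) < 0`. -/
theorem stmt8 (α c₁ : ℝ) (hα0 : 0 < α) (hα1 : α < 1) (hc₁ : 0 < c₁) :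
    TendstoUniformlyOn
      (fun k x => ∑ n ∈ Finset.range k, ((Lop α c₁)^[n] (Gker α c₁)) x)
      (fun x => ∑' n : ℕ, ((Lop α c₁)^[n] (Gker α c₁)) x)
      atTop (Set.Icc 0 c₁) ∧
    (∀ x ∈ Set.Ico (0:ℝ) c₁,
      0 < ∫ y in x..c₁, ∑' n : ℕ, ((Lop α c₁)^[n] (Gker α c₁)) y) ∧
    (∫ y in c₁..c₁, ∑' n : ℕ, ((Lop α c₁)^[n] (Gker α c₁)) y) = 0 ∧
    (∀ x ∈ Set.Ico (0:ℝ) c₁,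
      HasDerivAt (fun x' => ∫ y in x'..c₁, ∑' n : ℕ, ((Lop α c₁)^[n] (Gker α c₁)) y)
        (-(∑' n : ℕ, ((Lop α c₁)^[n] (Gker α c₁)) x)) x ∧
      -(∑' n : ℕ, ((Lop α c₁)^[n] (Gker α c₁)) x) < 0) := by
  have hle : (-c₁ : ℝ) ≤ c₁ := by linarith
  have hDb0 := (Db_pos hα0 hα1 hc₁).le
  set f : ℕ → ℝ → ℝ := fun n => (Lop α c₁)^[n] (Gker α c₁) with hf
  have hind := main_ind hα0 hα1 hc₁
  set M : ℕ → ℝ := fun n => Db α c₁ * ((Db α c₁ * (2*c₁))^n / n.factorial) with hM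
  have hMsum : Summable M :=
    (Real.summable_pow_div_factorial (Db α c₁ * (2*c₁))).mul_left (Db α c₁)
  have hbJ : ∀ n x, x ∈ Set.Icc (-c₁) c₁ → ‖f n x‖ ≤ M n := by
    intro n x hx
    rw [Real.norm_eq_abs]
    refine ((hind n).2.1 x hx).trans ?_
    have h2 : (0:ℝ) ≤ c₁ - x := by linarith [hx.2]
    have h1 : c₁ - x ≤ 2*c₁ := by linarith [hx.1]
    have h3 : (Db α c₁ * (c₁ - x)) ^ n ≤ (Db α c₁ * (2*c₁)) ^ n :=
      pow_le_pow_left₀ (mul_nonneg hDb0 h2) (mul_le_mul_of_nonneg_left h1 hDb0) n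
    have h4 : (0:ℝ) < (n.factorial : ℝ) := by positivity
    rw [hM, mul_div_assoc]
    exact mul_le_mul_of_nonneg_left ((div_le_div_iff_of_pos_right h4).mpr h3) hDb0
  have hunif : TendstoUniformlyOn (fun k x => ∑ n ∈ Finset.range k, f n x)
      (fun x => ∑' n, f n x) atTop (Set.Icc (-c₁) c₁) :=
    tendstoUniformlyOn_tsum_nat hMsum (fun n x hx => hbJ n x hx)
  have hsum : ∀ x, x ∈ Set.Icc (-c₁) c₁ → Summable (fun n => f n x) := fun x hx =>
    Summable.of_norm_bounded hMsum (fun n => hbJ n x hx)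
  set S : ℝ → ℝ := fun x => ∑' n, f n x with hS
  have hScont : ContinuousOn S (Set.Icc (-c₁) c₁) := by
    refine hunif.continuousOn (Filter.Eventually.of_forall (fun k => ?_)).frequently
    exact continuousOn_finset_sum _ (fun n _ => (hind n).1)
  have hSG : ∀ y ∈ Set.Icc (0:ℝ) c₁, Gker α c₁ y ≤ S y := by
    intro y hy
    have hyJ : y ∈ Set.Icc (-c₁) c₁ := ⟨by linarith [hy.1], hy.2⟩
    have h0 : S y = f 0 y + ∑' n, f (n+1) y := (hsum y hyJ).tsum_eq_zero_add
    have htail : 0 ≤ ∑' n, f (n+1) y := tsum_nonneg (fun n => (hind (n+1)).2.2 y hy)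
    have hG0 : f 0 y = Gker α c₁ y := by rw [hf]; simp
    rw [← hG0]
    linarith
  have hxint : ∀ x ∈ Set.Ico (0:ℝ) c₁, IntervalIntegrable S volume x c₁ := by
    intro x hx
    refine (hScont.mono ?_).intervalIntegrable
    rw [Set.uIcc_of_le hx.2.le]
    exact fun y hy => ⟨by linarith [hy.1, hx.1], hy.2⟩
  refine ⟨hunif.mono (fun y hy => ⟨by linarith [hy.1], hy.2⟩), ?_, ?_, ?_⟩
  · -- positivity of F
    intro x hx
    have hGint : IntervalIntegrable (Gker α c₁) volume x c₁ := by
      refine ((G_contOn hα0 hα1 hc₁).mono ?_).intervalIntegrable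
      rw [Set.uIcc_of_le hx.2.le]
      exact fun y hy => ⟨by linarith [hy.1, hx.1], hy.2⟩
    have hmono := intervalIntegral.integral_mono_on hx.2.le hGint (hxint x hx)
      (fun y hy => hSG y ⟨le_trans hx.1 hy.1, hy.2⟩)
    have hGpos : 0 < ∫ y in x..c₁, Gker α c₁ y :=
      intervalIntegral.intervalIntegral_pos_of_pos_on hGint
        (fun y hy => G_pos hα0 hα1 hc₁ ⟨le_trans hx.1 hy.1.le, hy.2⟩) hx.2
    exact lt_of_lt_of_le hGpos hmono
  · exact intervalIntegral.integral_same
  · intro x hx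
    have hmem : Set.Icc (-c₁) c₁ ∈ 𝓝 x := Icc_mem_nhds (by linarith [hx.1]) hx.2
    have hSca : ContinuousAt S x := hScont.continuousAt hmem
    have hSmf : StronglyMeasurableAtFilter S (𝓝 x) :=
      ⟨Set.Icc (-c₁) c₁, hmem, hScont.aestronglyMeasurable measurableSet_Icc⟩
    have hd := intervalIntegral.integral_hasDerivAt_left (hxint x hx) hSmf hSca
    refine ⟨hd, ?_⟩
    have h1 := G_pos hα0 hα1 hc₁ hx
    have h2 := hSG x ⟨hx.1, hx.2.le⟩
    simp only [hS] at h2 ⊢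
    linarith
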